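/- The 19 triangular lattice points in a closed regular hexagon of side length 2 form an 8-distance set: the set of squared pairwise distances between distinct points is exactly {1, 3, 4, 7, 9, 12, 13, 16}. -/

import Mathlib

/-- Triangular lattice point a•(1,0) + b•(1/2, √3/2). -/
noncomputable def tri (a b : ℤ) : ℝ × ℝ :=
  ((a : ℝ) + (b : ℝ) / 2, (b : ℝ) * Real.sqrt 3 / 2)

/-- Squared Euclidean distance in the plane. -/
def sqd (p q : ℝ × ℝ) : ℝ := (p.1 - q.1) ^ 2 + (p.2 - q.2) ^ 2

/-- The triangular lattice. -/
noncomputable def triLattice : Set (ℝ × ℝ) := {p | ∃ a b : ℤ, p = tri a b}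

/-- Closed regular hexagon of side `k` centered at the origin with a vertex at `(k,0)`. -/
noncomputable def hexR (k : ℤ) : Set (ℝ × ℝ) :=
  convexHull ℝ ({tri k 0, tri 0 k, tri (-k) k, tri (-k) 0, tri 0 (-k), tri k (-k)} : Set (ℝ × ℝ))

/-- Closed (k, k+1)-equiangular hexagon with vertices at lattice points. -/
noncomputable def hexE (k : ℤ) : Set (ℝ × ℝ) :=
  convexHull ℝ ({tri k 0, tri k (k+1), tri 0 (2*k+1), tri (-(k+1)) (2*k+1),
    tri (-(k+1)) (k+1), tri 0 0} : Set (ℝ × ℝ))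

/-- Set of squared distances between distinct points of `X`. -/
def sqdSet (X : Set (ℝ × ℝ)) : Set ℝ := {d | ∃ p ∈ X, ∃ q ∈ X, p ≠ q ∧ d = sqd p q}

lemma tri_inj {a b c d : ℤ} (h : tri a b = tri c d) : a = c ∧ b = d := by
  have s3 : (0:ℝ) < Real.sqrt 3 := by positivity
  simp only [tri, Prod.mk.injEq] at h
  obtain ⟨h1, h2⟩ := h
  have hb : (b : ℝ) = d := by
    have : ((b : ℝ) - d) * Real.sqrt 3 = 0 := by linarith
    rcases mul_eq_zero.mp this with h' | h'
    · linarith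
    · linarith
  have : b = d := by exact_mod_cast hb
  subst this
  have : (a : ℝ) = c := by linarith
  exact ⟨by exact_mod_cast this, rfl⟩

lemma tri_midpoint {a b c d e f : ℤ} (h1 : 2*e = a + c) (h2 : 2*f = b + d) :
    midpoint ℝ (tri a b) (tri c d) = tri e f := by
  have h1' : (2:ℝ)*e = a + c := by exact_mod_cast h1
  have h2' : (2:ℝ)*f = b + d := by exact_mod_cast h2
  simp only [tri, midpoint, Prod.ext_iff, AffineMap.lineMap_apply]
  norm_num
  constructor
  · linarith
  · linear_combination (-Real.sqrt 3/4) * h2'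

lemma sqd_tri (a b c d : ℤ) :
    sqd (tri a b) (tri c d) = (((a-c)^2 + (a-c)*(b-d) + (b-d)^2 : ℤ) : ℝ) := by
  have sq3 : Real.sqrt 3 ^ 2 = 3 := Real.sq_sqrt (by norm_num)
  simp only [sqd, tri]
  push_cast
  linear_combination (((b:ℝ) - d)^2/4) * sq3

/-- The 19 lattice coordinate pairs. -/
noncomputable def L : Finset (ℤ × ℤ) :=
  (Finset.Icc (-2:ℤ) 2 ×ˢ Finset.Icc (-2:ℤ) 2).filter fun p => -2 ≤ p.1 + p.2 ∧ p.1 + p.2 ≤ 2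

lemma mem_L {a b : ℤ} : (a, b) ∈ L ↔
    -2 ≤ a ∧ a ≤ 2 ∧ -2 ≤ b ∧ b ≤ 2 ∧ -2 ≤ a + b ∧ a + b ≤ 2 := by
  simp [L, Finset.mem_filter, Finset.mem_product, Finset.mem_Icc]
  tauto

lemma hull_le (c1 c2 d : ℝ)
    (hv : ∀ p ∈ ({tri 2 0, tri 0 2, tri (-2) 2, tri (-2) 0, tri 0 (-2), tri 2 (-2)} : Set (ℝ × ℝ)),
      c1 * p.1 + c2 * p.2 ≤ d) :
    ∀ p ∈ hexR 2, c1 * p.1 + c2 * p.2 ≤ d := by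
  intro p hp
  exact convexHull_min hv (convex_halfSpace_le
    ⟨fun x y => by simp [Prod.fst_add, Prod.snd_add]; ring,
     fun c x => by simp [Prod.smul_fst]; ring⟩ d) hp

lemma hex_constraints {a b : ℤ} (h : tri a b ∈ hexR 2) : (a, b) ∈ L := by
  have s3 : (0:ℝ) < Real.sqrt 3 := by positivity
  have sq3 : Real.sqrt 3 ^ 2 = 3 := Real.sq_sqrt (by norm_num)
  have key : ∀ c1 c2 d : ℝ,
      (∀ (u v : ℤ), (u,v) ∈ ({(2,0),(0,2),(-2,2),(-2,0),(0,-2),(2,-2)} : Set (ℤ×ℤ)) →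
        c1 * (tri u v).1 + c2 * (tri u v).2 ≤ d) →
      c1 * (tri a b).1 + c2 * (tri a b).2 ≤ d := by
    intro c1 c2 d hv
    refine hull_le c1 c2 d ?_ _ h
    intro p hp
    simp only [Set.mem_insert_iff, Set.mem_singleton_iff] at hp
    rcases hp with h|h|h|h|h|h <;> subst h
    · exact hv 2 0 (by norm_num)
    · exact hv 0 2 (by norm_num)
    · exact hv (-2) 2 (by norm_num)
    · exact hv (-2) 0 (by norm_num)
    · exact hv 0 (-2) (by norm_num)
    · exact hv 2 (-2) (by norm_num)
  have check : ∀ c1 c2 d : ℝ, (∀ (u v : ℤ),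
        (u,v) ∈ ({(2,0),(0,2),(-2,2),(-2,0),(0,-2),(2,-2)} : Set (ℤ×ℤ)) →
        c1 * ((u:ℝ) + v/2) + c2 * (v * Real.sqrt 3 / 2) ≤ d) →
      c1 * ((a:ℝ) + b/2) + c2 * (b * Real.sqrt 3 / 2) ≤ d := fun c1 c2 d hv => key c1 c2 d hv
  have hb2 : b ≤ 2 := by
    have := check 0 1 (Real.sqrt 3) (by
      intro u v huv
      simp only [Set.mem_insert_iff, Set.mem_singleton_iff, Prod.mk.injEq] at huv
      rcases huv with ⟨hu,hv⟩|⟨hu,hv⟩|⟨hu,hv⟩|⟨hu,hv⟩|⟨hu,hv⟩|⟨hu,hv⟩ <;> subst hu <;> subst hv <;>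
        push_cast <;> nlinarith)
    have : (b:ℝ) ≤ 2 := by nlinarith
    exact_mod_cast this
  have hb1 : -2 ≤ b := by
    have := check 0 (-1) (Real.sqrt 3) (by
      intro u v huv
      simp only [Set.mem_insert_iff, Set.mem_singleton_iff, Prod.mk.injEq] at huv
      rcases huv with ⟨hu,hv⟩|⟨hu,hv⟩|⟨hu,hv⟩|⟨hu,hv⟩|⟨hu,hv⟩|⟨hu,hv⟩ <;> subst hu <;> subst hv <;>
        push_cast <;> nlinarith)
    have : (-2:ℝ) ≤ (b:ℝ) := by nlinarith
    exact_mod_cast this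
  have ha2 : a ≤ 2 := by
    have := check (Real.sqrt 3) (-1) (2 * Real.sqrt 3) (by
      intro u v huv
      simp only [Set.mem_insert_iff, Set.mem_singleton_iff, Prod.mk.injEq] at huv
      rcases huv with ⟨hu,hv⟩|⟨hu,hv⟩|⟨hu,hv⟩|⟨hu,hv⟩|⟨hu,hv⟩|⟨hu,hv⟩ <;> subst hu <;> subst hv <;>
        push_cast <;> nlinarith)
    have : (a:ℝ) ≤ 2 := by nlinarith
    exact_mod_cast this
  have ha1 : -2 ≤ a := by
    have := check (-Real.sqrt 3) 1 (2 * Real.sqrt 3) (by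
      intro u v huv
      simp only [Set.mem_insert_iff, Set.mem_singleton_iff, Prod.mk.injEq] at huv
      rcases huv with ⟨hu,hv⟩|⟨hu,hv⟩|⟨hu,hv⟩|⟨hu,hv⟩|⟨hu,hv⟩|⟨hu,hv⟩ <;> subst hu <;> subst hv <;>
        push_cast <;> nlinarith)
    have : (-2:ℝ) ≤ (a:ℝ) := by nlinarith
    exact_mod_cast this
  have hab2 : a + b ≤ 2 := by
    have := check (Real.sqrt 3) 1 (2 * Real.sqrt 3) (by
      intro u v huv
      simp only [Set.mem_insert_iff, Set.mem_singleton_iff, Prod.mk.injEq] at huv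
      rcases huv with ⟨hu,hv⟩|⟨hu,hv⟩|⟨hu,hv⟩|⟨hu,hv⟩|⟨hu,hv⟩|⟨hu,hv⟩ <;> subst hu <;> subst hv <;>
        push_cast <;> nlinarith)
    have : (a:ℝ) + b ≤ 2 := by nlinarith
    exact_mod_cast this
  have hab1 : -2 ≤ a + b := by
    have := check (-Real.sqrt 3) (-1) (2 * Real.sqrt 3) (by
      intro u v huv
      simp only [Set.mem_insert_iff, Set.mem_singleton_iff, Prod.mk.injEq] at huv
      rcases huv with ⟨hu,hv⟩|⟨hu,hv⟩|⟨hu,hv⟩|⟨hu,hv⟩|⟨hu,hv⟩|⟨hu,hv⟩ <;> subst hu <;> subst hv <;>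
        push_cast <;> nlinarith)
    have : (-2:ℝ) ≤ (a:ℝ) + b := by nlinarith
    exact_mod_cast this
  exact mem_L.mpr ⟨ha1, ha2, hb1, hb2, hab1, hab2⟩

lemma hexmem {a b : ℤ} (h : (a, b) ∈ L) : tri a b ∈ hexR 2 := by
  have hconv : Convex ℝ (hexR 2) := convex_convexHull ℝ _
  have hmid : ∀ {p q : ℝ × ℝ}, p ∈ hexR 2 → q ∈ hexR 2 → midpoint ℝ p q ∈ hexR 2 :=
    fun hp hq => hconv.segment_subset hp hq (midpoint_mem_segment _ _)
  have v1 : tri 2 0 ∈ hexR 2 := subset_convexHull ℝ _ (by simp)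
  have v2 : tri 0 2 ∈ hexR 2 := subset_convexHull ℝ _ (by simp)
  have v3 : tri (-2) 2 ∈ hexR 2 := subset_convexHull ℝ _ (by simp)
  have v4 : tri (-2) 0 ∈ hexR 2 := subset_convexHull ℝ _ (by simp)
  have v5 : tri 0 (-2) ∈ hexR 2 := subset_convexHull ℝ _ (by simp)
  have v6 : tri 2 (-2) ∈ hexR 2 := subset_convexHull ℝ _ (by simp)
  have c0 : tri 0 0 ∈ hexR 2 := by
    have h := hmid v1 v4
    rwa [show midpoint ℝ (tri 2 0) (tri (-2) 0) = tri 0 0 from tri_midpoint (by norm_num) (by norm_num)] at h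
  have e1 : tri 1 1 ∈ hexR 2 := by
    have h := hmid v1 v2
    rwa [show midpoint ℝ (tri 2 0) (tri 0 2) = tri 1 1 from tri_midpoint (by norm_num) (by norm_num)] at h
  have e2 : tri (-1) 2 ∈ hexR 2 := by
    have h := hmid v2 v3
    rwa [show midpoint ℝ (tri 0 2) (tri (-2) 2) = tri (-1) 2 from tri_midpoint (by norm_num) (by norm_num)] at h
  have e3 : tri (-2) 1 ∈ hexR 2 := by
    have h := hmid v3 v4
    rwa [show midpoint ℝ (tri (-2) 2) (tri (-2) 0) = tri (-2) 1 from tri_midpoint (by norm_num) (by norm_num)] at h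
  have e4 : tri (-1) (-1) ∈ hexR 2 := by
    have h := hmid v4 v5
    rwa [show midpoint ℝ (tri (-2) 0) (tri 0 (-2)) = tri (-1) (-1) from tri_midpoint (by norm_num) (by norm_num)] at h
  have e5 : tri 1 (-2) ∈ hexR 2 := by
    have h := hmid v5 v6
    rwa [show midpoint ℝ (tri 0 (-2)) (tri 2 (-2)) = tri 1 (-2) from tri_midpoint (by norm_num) (by norm_num)] at h
  have e6 : tri 2 (-1) ∈ hexR 2 := by
    have h := hmid v6 v1
    rwa [show midpoint ℝ (tri 2 (-2)) (tri 2 0) = tri 2 (-1) from tri_midpoint (by norm_num) (by norm_num)] at h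
  have i1 : tri 1 0 ∈ hexR 2 := by
    have h := hmid v1 c0
    rwa [show midpoint ℝ (tri 2 0) (tri 0 0) = tri 1 0 from tri_midpoint (by norm_num) (by norm_num)] at h
  have i2 : tri 0 1 ∈ hexR 2 := by
    have h := hmid v2 c0
    rwa [show midpoint ℝ (tri 0 2) (tri 0 0) = tri 0 1 from tri_midpoint (by norm_num) (by norm_num)] at h
  have i3 : tri (-1) 1 ∈ hexR 2 := by
    have h := hmid v3 c0
    rwa [show midpoint ℝ (tri (-2) 2) (tri 0 0) = tri (-1) 1 from tri_midpoint (by norm_num) (by norm_num)] at h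
  have i4 : tri (-1) 0 ∈ hexR 2 := by
    have h := hmid v4 c0
    rwa [show midpoint ℝ (tri (-2) 0) (tri 0 0) = tri (-1) 0 from tri_midpoint (by norm_num) (by norm_num)] at h
  have i5 : tri 0 (-1) ∈ hexR 2 := by
    have h := hmid v5 c0
    rwa [show midpoint ℝ (tri 0 (-2)) (tri 0 0) = tri 0 (-1) from tri_midpoint (by norm_num) (by norm_num)] at h
  have i6 : tri 1 (-1) ∈ hexR 2 := by
    have h := hmid v6 c0
    rwa [show midpoint ℝ (tri 2 (-2)) (tri 0 0) = tri 1 (-1) from tri_midpoint (by norm_num) (by norm_num)] at h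
  rw [mem_L] at h
  obtain ⟨h1, h2, h3, h4, h5, h6⟩ := h
  interval_cases a <;> interval_cases b <;> first | assumption | omega

lemma X_eq : triLattice ∩ hexR 2 = ↑(L.image fun p => tri p.1 p.2) := by
  ext p
  constructor
  · rintro ⟨⟨a, b, rfl⟩, hp⟩
    have := hex_constraints hp
    simp only [Finset.coe_image, Set.mem_image, Finset.mem_coe]
    exact ⟨(a, b), this, rfl⟩
  · intro hp
    simp only [Finset.coe_image, Set.mem_image, Finset.mem_coe] at hp
    obtain ⟨⟨a, b⟩, hab, rfl⟩ := hp
    exact ⟨⟨a, b, rfl⟩, hexmem hab⟩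

lemma distvals (u v : ℤ) (h1 : -4 ≤ u) (h2 : u ≤ 4) (h3 : -4 ≤ v) (h4 : v ≤ 4)
    (h5 : -4 ≤ u + v) (h6 : u + v ≤ 4) (h : ¬(u = 0 ∧ v = 0)) :
    u^2 + u*v + v^2 = 1 ∨ u^2 + u*v + v^2 = 3 ∨ u^2 + u*v + v^2 = 4 ∨
    u^2 + u*v + v^2 = 7 ∨ u^2 + u*v + v^2 = 9 ∨ u^2 + u*v + v^2 = 12 ∨
    u^2 + u*v + v^2 = 13 ∨ u^2 + u*v + v^2 = 16 := by
  interval_cases u <;> interval_cases v <;>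
    first | decide | (exfalso; omega)

theorem hexagon_side2_eight_distance :
    (triLattice ∩ hexR 2).ncard = 19 ∧
      sqdSet (triLattice ∩ hexR 2) = {1, 3, 4, 7, 9, 12, 13, 16} := by
  have hinj : Function.Injective (fun p : ℤ × ℤ => tri p.1 p.2) := by
    rintro ⟨a, b⟩ ⟨c, d⟩ h
    have := tri_inj h
    simp_all
  constructor
  · rw [X_eq, Set.ncard_coe_finset, Finset.card_image_of_injective _ hinj]
    decide
  · ext r
    simp only [sqdSet, Set.mem_setOf_eq, Set.mem_insert_iff, Set.mem_singleton_iff]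
    constructor
    · rintro ⟨p, hp, q, hq, hne, rfl⟩
      rw [X_eq] at hp hq
      simp only [Finset.coe_image, Set.mem_image, Finset.mem_coe] at hp hq
      obtain ⟨⟨a, b⟩, hab, rfl⟩ := hp
      obtain ⟨⟨c, d⟩, hcd, rfl⟩ := hq
      rw [mem_L] at hab hcd
      have hne' : ¬(a - c = 0 ∧ b - d = 0) := by
        rintro ⟨h1, h2⟩
        exact hne (by rw [show a = c by omega, show b = d by omega])
      have := distvals (a - c) (b - d) (by omega) (by omega) (by omega) (by omega)
        (by omega) (by omega) hne'
      rw [sqd_tri]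
      rcases this with h|h|h|h|h|h|h|h <;> rw [h] <;> norm_num
    · have mem : ∀ a b : ℤ, (a, b) ∈ L → tri a b ∈ triLattice ∩ hexR 2 :=
        fun a b h => ⟨⟨a, b, rfl⟩, hexmem h⟩
      have hne : ∀ a b c d : ℤ, ¬(a = c ∧ b = d) → tri a b ≠ tri c d := by
        intro a b c d h heq
        exact h (tri_inj heq)
      rintro (rfl|rfl|rfl|rfl|rfl|rfl|rfl|rfl)
      · exact ⟨tri 0 0, mem 0 0 (by decide), tri 1 0, mem 1 0 (by decide),
          hne _ _ _ _ (by omega), by rw [sqd_tri]; norm_num⟩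
      · exact ⟨tri 0 0, mem 0 0 (by decide), tri 1 1, mem 1 1 (by decide),
          hne _ _ _ _ (by omega), by rw [sqd_tri]; norm_num⟩
      · exact ⟨tri 0 0, mem 0 0 (by decide), tri 2 0, mem 2 0 (by decide),
          hne _ _ _ _ (by omega), by rw [sqd_tri]; norm_num⟩
      · exact ⟨tri (-2) 0, mem (-2) 0 (by decide), tri (-1) 2, mem (-1) 2 (by decide),
          hne _ _ _ _ (by omega), by rw [sqd_tri]; norm_num⟩
      · exact ⟨tri (-2) 0, mem (-2) 0 (by decide), tri 1 0, mem 1 0 (by decide),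
          hne _ _ _ _ (by omega), by rw [sqd_tri]; norm_num⟩
      · exact ⟨tri (-1) (-1), mem (-1) (-1) (by decide), tri 1 1, mem 1 1 (by decide),
          hne _ _ _ _ (by omega), by rw [sqd_tri]; norm_num⟩
      · exact ⟨tri (-2) 0, mem (-2) 0 (by decide), tri 1 1, mem 1 1 (by decide),
          hne _ _ _ _ (by omega), by rw [sqd_tri]; norm_num⟩
      · exact ⟨tri (-2) 0, mem (-2) 0 (by decide), tri 2 0, mem 2 0 (by decide),
          hne _ _ _ _ (by omega), by rw [sqd_tri]; norm_num⟩
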